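/- Let ζ ∈ k be a primitive n-th root of unity and let t be a positive divisor of n with t < n (so that n ∤ t). Then there exists an H_n(ζ,1,t)-module-algebra structure (σ, δ) on A = k[u]/(u^n − 1) with σ(u) = ζ·u and δ ≠ 0 if and only if t = 1. (Equivalently: for the coradically graded generalized Taft algebra T(n, N, 0) = H_n(ζ, 1, n/N), such structures exist if and only if N = n, i.e., if and only if T(n,N,0) is a Taft algebra.) -/

import Mathlib

/-- An `H_n(ζ,m,t)`-module-algebra structure on `A`, given by the action `σ` of the
grouplike generator `y` and the action `δ` of the `(y^m,1)`-skew primitive `x`;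
here `N = n / gcd(n, mt)` is the nilpotency order of `x`. -/
def IsHAction {k A : Type*} [Field k] [CommRing A] [Algebra k A]
    (n m t N : ℕ) (ζ : k) (σ : A ≃ₐ[k] A) (δ : A →ₗ[k] A) : Prop :=
  σ ^ n = 1 ∧ δ 1 = 0 ∧
  (∀ a c : A, δ (a * c) = (σ ^ m) a * δ c + δ a * c) ∧
  δ ^ N = 0 ∧
  σ.toLinearMap ∘ₗ δ = ζ ^ t • (δ ∘ₗ σ.toLinearMap)

section Aux

variable {k : Type*} [Field k]

/-- Geometric sum `1 + ζ + ... + ζ^{i-1}`. -/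
def gq (ζ : k) (i : ℕ) : k := ∑ j ∈ Finset.range i, ζ ^ j

lemma gq_add (ζ : k) (a c : ℕ) : gq ζ (a + c) = gq ζ a + ζ ^ a * gq ζ c := by
  induction c with
  | zero => simp [gq]
  | succ c ih =>
      have h1 : gq ζ (a + c + 1) = gq ζ (a + c) + ζ ^ (a + c) :=
        Finset.sum_range_succ _ _
      have h2 : gq ζ (c + 1) = gq ζ c + ζ ^ c := Finset.sum_range_succ _ _
      rw [← Nat.add_assoc, h1, ih, h2, pow_add]
      ring

lemma gq_succ (ζ : k) (i : ℕ) : gq ζ (i + 1) = 1 + ζ * gq ζ i := by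
  have := gq_add ζ 1 i
  rw [Nat.add_comm 1 i] at this
  simpa [gq] using this

lemma gq_eq_zero {ζ : k} (h1 : ζ ≠ 1) {m : ℕ} (h : ζ ^ m = 1) : gq ζ m = 0 := by
  rw [gq, geom_sum_eq h1, h, sub_self, zero_div]

lemma pow_eq_one_of_gq_eq_zero {ζ : k} (h1 : ζ ≠ 1) {m : ℕ} (h : gq ζ m = 0) :
    ζ ^ m = 1 := by
  rw [gq, geom_sum_eq h1] at h
  have h2 : ζ - 1 ≠ 0 := sub_ne_zero.mpr h1
  exact sub_eq_zero.mp ((div_eq_zero_iff.mp h).resolve_right h2)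

end Aux

/-- For the coradically graded generalized Taft algebra `T(n, n/t, 0) = H_n(ζ, 1, t)`,
a module-algebra structure `(σ, δ)` on `A = k[u]/(uⁿ - 1)` with `σ(u) = ζ·u` and
`δ ≠ 0` exists iff `t = 1`, i.e. iff it is a Taft algebra. -/
theorem stmt_12 (k : Type*) [Field k] [IsAlgClosed k] [CharZero k]
    (n : ℕ) (hn : 0 < n) (ζ : k) (hζ : IsPrimitiveRoot ζ n)
    (t : ℕ) (ht0 : 0 < t) (htn : t ∣ n) (htlt : t < n)
    (A : Type*) [CommRing A] [Algebra k A]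
    (u : A) (b : Module.Basis (Fin n) k A) (hb : ∀ i : Fin n, b i = u ^ (i : ℕ))
    (hu : u ^ n = 1) :
    (∃ (σ : A ≃ₐ[k] A) (δ : A →ₗ[k] A),
        IsHAction n 1 t (n / Nat.gcd n (1 * t)) ζ σ δ ∧ σ u = ζ • u ∧ δ ≠ 0)
      ↔ t = 1 := by
  have hn2 : 2 ≤ n := by omega
  have hζ1 : ζ ≠ 1 := hζ.ne_one hn2
  have hζn : ζ ^ n = 1 := hζ.pow_eq_one
  have hζ0 : ζ ≠ 0 := hζ.ne_zero (by omega)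
  have hupow : ∀ i : ℕ, u ^ (i % n) = u ^ i := by
    intro i
    conv_rhs => rw [← Nat.div_add_mod i n]
    rw [pow_add, pow_mul, hu, one_pow, one_mul]
  have hζpow : ∀ i : ℕ, ζ ^ (i % n) = ζ ^ i := by
    intro i
    conv_rhs => rw [← Nat.div_add_mod i n]
    rw [pow_add, pow_mul, hζn, one_pow, one_mul]
  have hgqn : gq ζ n = 0 := gq_eq_zero hζ1 hζn
  have hgqmod : ∀ i : ℕ, gq ζ (i % n) = gq ζ i := by
    intro i
    conv_rhs => rw [← Nat.div_add_mod i n]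
    generalize i / n = q
    induction q with
    | zero => simp
    | succ q ih =>
        have : n * (q + 1) + i % n = n + (n * q + i % n) := by ring
        rw [this, gq_add, hgqn, hζn, ih]
        ring
  have hune : u ≠ 0 := by
    have h1 : b ⟨1 % n, Nat.mod_lt _ hn⟩ = u := by
      rw [hb]; simp [Nat.mod_eq_of_lt hn2]
    rw [← h1]; exact b.ne_zero _
  constructor
  · rintro ⟨σ, δ, hact, hσu, hδne⟩
    unfold IsHAction at hact
    obtain ⟨hσn, hδ1, hder, hδN, hcomm⟩ := hact
    have hσpow : ∀ i : ℕ, σ (u ^ i) = ζ ^ i • u ^ i := by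
      intro i; rw [map_pow, hσu, smul_pow]
    -- δ u = c • u^(t+1)
    have hcomm' : ∀ x : A, σ (δ x) = ζ ^ t • δ (σ x) := by
      intro x
      have := LinearMap.congr_fun hcomm x
      simpa using this
    have heq : σ (δ u) = ζ ^ (t + 1) • δ u := by
      rw [hcomm' u, hσu, map_smul, smul_smul, ← pow_succ]
    set j0 : Fin n := ⟨(t + 1) % n, Nat.mod_lt _ hn⟩ with hj0
    have hcoeff : ∀ j : Fin n, j ≠ j0 → b.repr (δ u) j = 0 := by
      intro j hj
      have hexp : σ (δ u) = ∑ i : Fin n, (ζ ^ (i : ℕ) * b.repr (δ u) i) • b i := by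
        conv_lhs => rw [← b.sum_repr (δ u)]
        rw [map_sum]
        refine Finset.sum_congr rfl fun i _ => ?_
        rw [map_smul, hb, hσpow, smul_smul, ← hb, mul_comm]
      have hexp2 : ζ ^ (t + 1) • δ u
          = ∑ i : Fin n, (ζ ^ (t + 1) * b.repr (δ u) i) • b i := by
        conv_lhs => rw [← b.sum_repr (δ u)]
        rw [Finset.smul_sum]
        exact Finset.sum_congr rfl fun i _ => by rw [smul_smul]
      have hsum0 : ∑ i : Fin n,
          ((ζ ^ (i : ℕ) - ζ ^ (t + 1)) * b.repr (δ u) i) • b i = 0 := by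
        have : ∑ i : Fin n, ((ζ ^ (i : ℕ) - ζ ^ (t + 1)) * b.repr (δ u) i) • b i
            = (∑ i : Fin n, (ζ ^ (i : ℕ) * b.repr (δ u) i) • b i)
              - ∑ i : Fin n, (ζ ^ (t + 1) * b.repr (δ u) i) • b i := by
          rw [← Finset.sum_sub_distrib]
          exact Finset.sum_congr rfl fun i _ => by rw [← sub_smul, sub_mul]
        rw [this, ← hexp, ← hexp2, heq, sub_self]
      have hlin := Fintype.linearIndependent_iff.mp b.linearIndependent _ hsum0 j
      rcases mul_eq_zero.mp hlin with h | h
      · exfalso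
        apply hj
        have hpe : ζ ^ (j : ℕ) = ζ ^ ((t + 1) % n) := by
          rw [hζpow]
          exact sub_eq_zero.mp h
        exact Fin.ext (hζ.pow_inj j.isLt (Nat.mod_lt _ hn) hpe)
      · exact h
    have hδu : δ u = b.repr (δ u) j0 • u ^ (t + 1) := by
      conv_lhs => rw [← b.sum_repr (δ u)]
      rw [Finset.sum_eq_single j0]
      · rw [hb]
        simp only [hj0]
        rw [hupow]
      · intro j _ hj; rw [hcoeff j hj, zero_smul]
      · intro h; exact absurd (Finset.mem_univ j0) h
    set c : k := b.repr (δ u) j0 with hc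
    have hδpow : ∀ i : ℕ, δ (u ^ i) = (c * gq ζ i) • u ^ (i + t) := by
      intro i
      induction i with
      | zero => simp [gq, hδ1]
      | succ i ih =>
          rw [pow_succ' u i, hder u (u ^ i), pow_one, hσu, ih, hδu,
            smul_mul_smul_comm, smul_mul_assoc]
          have e1 : u * u ^ (i + t) = u ^ (i + 1 + t) := by ring
          have e2 : u ^ (t + 1) * u ^ i = u ^ (i + 1 + t) := by ring
          rw [e1, e2, ← add_smul, gq_succ]
          ring_nf
    set N : ℕ := n / Nat.gcd n (1 * t) with hN
    have hNt : N * t = n := by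
      have h1 : Nat.gcd n (1 * t) = t := by
        rw [one_mul, Nat.gcd_comm]
        exact Nat.gcd_eq_left htn
      rw [hN, h1]
      exact Nat.div_mul_cancel htn
    have hδiter : ∀ j : ℕ, (δ ^ j) u
        = (c ^ j * ∏ l ∈ Finset.range j, gq ζ (1 + l * t)) • u ^ (1 + j * t) := by
      intro j
      induction j with
      | zero => simp
      | succ j ih =>
          rw [pow_succ' δ j, Module.End.mul_apply, ih, map_smul, hδpow, smul_smul,
            Finset.prod_range_succ]
          have e : 1 + j * t + t = 1 + (j + 1) * t := by ring
          rw [e]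
          congr 1
          ring
    have h0 : (δ ^ N) u = 0 := by rw [hδN]; rfl
    rw [hδiter N] at h0
    have hun : u ^ (1 + N * t) = u := by
      rw [hNt, pow_add, pow_one, hu, mul_one]
    rw [hun] at h0
    have hc0 : c ≠ 0 := by
      intro h
      apply hδne
      apply b.ext
      intro i
      rw [hb, hδpow, h, zero_mul, zero_smul, LinearMap.zero_apply]
    have hP : c ^ N * ∏ l ∈ Finset.range N, gq ζ (1 + l * t) = 0 :=
      (smul_eq_zero.mp h0).resolve_right hune
    obtain ⟨l, hl, hgql⟩ : ∃ l ∈ Finset.range N, gq ζ (1 + l * t) = 0 := by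
      rcases mul_eq_zero.mp hP with h | h
      · exfalso
        have hNpos : N ≠ 0 := by
          intro h'
          rw [h', zero_mul] at hNt
          omega
        exact hc0 ((pow_eq_zero_iff hNpos).mp h)
      · exact Finset.prod_eq_zero_iff.mp h
    have hpow1 : ζ ^ (1 + l * t) = 1 := pow_eq_one_of_gq_eq_zero hζ1 hgql
    have hdvd : n ∣ 1 + l * t := hζ.dvd_of_pow_eq_one _ hpow1
    have ht1 : t ∣ 1 := by
      have h1 : t ∣ 1 + l * t := dvd_trans htn hdvd
      have h2 : t ∣ l * t := dvd_mul_left t l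
      have := Nat.dvd_sub h1 h2
      simpa using this
    exact Nat.dvd_one.mp ht1
  · intro ht
    subst ht
    -- construct σ
    set f : A →ₗ[k] A := b.constr k fun i => ζ ^ (i : ℕ) • b i with hf
    set g : A →ₗ[k] A := b.constr k fun i => (ζ ^ (i : ℕ))⁻¹ • b i with hg
    have hfb : ∀ i : Fin n, f (b i) = ζ ^ (i : ℕ) • b i := fun i => by
      rw [hf]; exact b.constr_basis k _ i
    have hgb : ∀ i : Fin n, g (b i) = (ζ ^ (i : ℕ))⁻¹ • b i := fun i => by
      rw [hg]; exact b.constr_basis k _ i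
    have hfpow : ∀ i : ℕ, f (u ^ i) = ζ ^ i • u ^ i := by
      intro i
      rw [← hupow i, ← hζpow i]
      have hbe : b ⟨i % n, Nat.mod_lt _ hn⟩ = u ^ (i % n) := hb _
      rw [← hbe, hfb, hbe]
    have hgf : g ∘ₗ f = LinearMap.id := by
      apply b.ext
      intro i
      simp only [LinearMap.comp_apply, LinearMap.id_apply, hfb, map_smul, hgb,
        smul_smul]
      rw [mul_inv_cancel₀ (pow_ne_zero _ hζ0), one_smul]
    have hfg : f ∘ₗ g = LinearMap.id := by
      apply b.ext
      intro i
      simp only [LinearMap.comp_apply, LinearMap.id_apply, hgb, map_smul, hfb,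
        smul_smul]
      rw [inv_mul_cancel₀ (pow_ne_zero _ hζ0), one_smul]
    set e : A ≃ₗ[k] A := LinearEquiv.ofLinear f g hfg hgf with he
    have hex : ∀ x : A, e x = f x := fun x => rfl
    have hfone : f 1 = 1 := by
      have := hfpow 0
      simpa using this
    have hfmul : ∀ x y : A, f (x * y) = f x * f y := by
      have hB : (LinearMap.mul k A).compr₂ f
          = (LinearMap.mul k A).compl₁₂ f f := by
        apply LinearMap.ext_basis b b
        intro i j
        simp only [LinearMap.compr₂_apply, LinearMap.mul_apply',
          LinearMap.compl₁₂_apply]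
        rw [hb, hb, ← pow_add, hfpow, hfpow, hfpow, smul_mul_smul_comm,
          ← pow_add, ← pow_add]
      intro x y
      have := LinearMap.congr_fun (LinearMap.congr_fun hB x) y
      simpa using this
    set σ : A ≃ₐ[k] A := AlgEquiv.ofLinearEquiv e hfone hfmul with hσ
    have hσx : ∀ x : A, σ x = f x := fun x => rfl
    have hσpow : ∀ i : ℕ, σ (u ^ i) = ζ ^ i • u ^ i := fun i => by
      rw [hσx, hfpow]
    have hσu : σ u = ζ • u := by
      have := hσpow 1
      simpa using this
    -- construct δ
    set δ : A →ₗ[k] A := b.constr k fun i => gq ζ (i : ℕ) • u ^ ((i : ℕ) + 1)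
      with hδ
    have hδb : ∀ i : Fin n, δ (b i) = gq ζ (i : ℕ) • u ^ ((i : ℕ) + 1) :=
      fun i => by rw [hδ]; exact b.constr_basis k _ i
    have hδpow : ∀ i : ℕ, δ (u ^ i) = gq ζ i • u ^ (i + 1) := by
      intro i
      have hbe : b ⟨i % n, Nat.mod_lt _ hn⟩ = u ^ (i % n) := hb _
      rw [← hupow i, ← hbe, hδb]
      show gq ζ (i % n) • u ^ (i % n + 1) = gq ζ i • u ^ (i + 1)
      rw [hgqmod, pow_succ, pow_succ, hupow]
    have hδ1 : δ 1 = 0 := by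
      have := hδpow 0
      simpa [gq] using this
    have hδiter : ∀ (j i : ℕ), (δ ^ j) (u ^ i)
        = (∏ l ∈ Finset.range j, gq ζ (i + l)) • u ^ (i + j) := by
      intro j
      induction j with
      | zero => intro i; simp
      | succ j ih =>
          intro i
          rw [pow_succ' δ j, Module.End.mul_apply, ih, map_smul, hδpow,
            smul_smul, Finset.prod_range_succ]
          have e1 : i + j + 1 = i + (j + 1) := by ring
          rw [e1]
    refine ⟨σ, δ, ?_, hσu, ?_⟩
    · unfold IsHAction
      refine ⟨?_, hδ1, ?_, ?_, ?_⟩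
      · -- σ ^ n = 1
        have hit : ∀ (j : ℕ) (x : A), (σ ^ j) x = (f ^ j) x := by
          intro j
          induction j with
          | zero => intro x; rfl
          | succ j ih =>
              intro x
              rw [pow_succ' σ j, pow_succ' f j, AlgEquiv.mul_apply,
                Module.End.mul_apply, ih, hσx]
        have hitpow : ∀ (j i : ℕ), (f ^ j) (u ^ i) = ζ ^ (j * i) • u ^ i := by
          intro j
          induction j with
          | zero => intro i; simp
          | succ j ih =>
              intro i
              rw [pow_succ' f j, Module.End.mul_apply, ih, map_smul, hfpow,
                smul_smul, ← pow_add]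
              congr 2
              ring
        ext x
        show (σ ^ n) x = x
        rw [hit]
        conv_lhs => rw [← b.sum_repr x]
        rw [map_sum]
        conv_rhs => rw [← b.sum_repr x]
        refine Finset.sum_congr rfl fun i _ => ?_
        rw [map_smul, hb, hitpow, pow_mul, hζn, one_pow, one_smul]
      · -- derivation
        intro a c
        rw [pow_one]
        have hB : (LinearMap.mul k A).compr₂ δ
            = (LinearMap.mul k A).compl₁₂ σ.toLinearMap δ
              + ((LinearMap.mul k A).comp δ : A →ₗ[k] A →ₗ[k] A) := by
          apply LinearMap.ext_basis b b
          intro i j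
          simp only [LinearMap.compr₂_apply, LinearMap.mul_apply',
            LinearMap.compl₁₂_apply, LinearMap.add_apply, LinearMap.comp_apply,
            AlgEquiv.toLinearMap_apply]
          rw [hb, hb, ← pow_add, hδpow, hσpow, hδpow, hδpow,
            smul_mul_smul_comm, smul_mul_assoc, ← pow_add, ← pow_add]
          have e1 : (i : ℕ) + ((j : ℕ) + 1) = (i : ℕ) + (j : ℕ) + 1 := by ring
          have e2 : (i : ℕ) + 1 + (j : ℕ) = (i : ℕ) + (j : ℕ) + 1 := by ring
          rw [e1, e2, ← add_smul, gq_add]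
          ring_nf
        have := LinearMap.congr_fun (LinearMap.congr_fun hB a) c
        simpa using this
      · -- δ ^ N = 0 with N = n
        have hNn : n / Nat.gcd n (1 * 1) = n := by simp
        rw [hNn]
        apply b.ext
        intro i
        rw [hb, hδiter, LinearMap.zero_apply]
        have hl : (n - (i : ℕ)) % n ∈ Finset.range n :=
          Finset.mem_range.mpr (Nat.mod_lt _ hn)
        have hz : gq ζ ((i : ℕ) + (n - (i : ℕ)) % n) = 0 := by
          apply gq_eq_zero hζ1
          rw [← hζpow]
          have hi := i.isLt
          have : ((i : ℕ) + (n - (i : ℕ)) % n) % n = 0 := by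
            rcases Nat.eq_zero_or_pos (i : ℕ) with h | h
            · rw [h]; simp
            · have h1 : (n - (i : ℕ)) % n = n - (i : ℕ) :=
                Nat.mod_eq_of_lt (by omega)
              rw [h1]
              have h2 : (i : ℕ) + (n - (i : ℕ)) = n := by omega
              rw [h2, Nat.mod_self]
          rw [this, pow_zero]
        rw [Finset.prod_eq_zero hl hz, zero_smul]
      · -- commutation
        apply b.ext
        intro i
        simp only [LinearMap.comp_apply, LinearMap.smul_apply,
          AlgEquiv.toLinearMap_apply]
        rw [hb, hδpow, map_smul, hσpow, hσpow, map_smul, hδpow,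
          smul_smul, smul_smul, smul_smul]
        congr 1
        rw [pow_one, pow_succ]
        ring
    · -- δ ≠ 0
      intro h
      have h2 : δ u = u ^ 2 := by
        have := hδpow 1
        simpa [gq] using this
      have h3 : u ^ 2 ≠ 0 := by
        have hbe : b ⟨2 % n, Nat.mod_lt _ hn⟩ = u ^ (2 % n) := hb _
        rw [← hupow 2, ← hbe]
        exact b.ne_zero _
      rw [h] at h2
      exact h3 (by rw [← h2]; rfl)
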